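/- Let U, L be finite sets of natural numbers, C = U ∩ L, and S ⊆ (U \ C) ∪ (L \ C). With U' = (U \ S) ∪ (L ∩ S) and L' = (L \ S) ∪ (U ∩ S), one has GTP(U)·GTP(L) / (GTP(U')·GTP(L')) = [P(Ū,Ū)·P(L̄,L̄) / (P(Ū',Ū')·P(L̄',L̄'))] · [sf(|U'|-1)·sf(|L'|-1) / (sf(|U|-1)·sf(|L|-1))], where Ū = U\C, L̄ = L\C, Ū' = U'\C, L̄' = L'\C, P(A,B) = ∏_{(a,b)∈A×B, a<b}(b-a), and sf(m) = 1!·2!···m! is the superfactorial. Equivalently, GTP(U)·GTP(L)·P(Ū',Ū')·P(L̄',L̄')·sf(|U|-1)·sf(|L|-1) = GTP(U')·GTP(L')·P(Ū,Ū)·P(L̄,L̄)·sf(|U'|-1)·sf(|L'|-1). -/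

import Mathlib

open Finset

/-- A Gelfand–Tsetlin pattern with `n` rows: row `i` (for `i : Fin n`) has
entries `entry i 0, …, entry i i`, rows interlace, and entries beyond the
row length are normalized to `0`. -/
structure GTPattern (n : ℕ) where
  entry : Fin n → ℕ → ℕ
  interlace : ∀ i : Fin n, ∀ h : i.1 + 1 < n, ∀ j : ℕ, j ≤ i.1 →
    entry ⟨i.1 + 1, h⟩ j ≤ entry i j ∧ entry i j < entry ⟨i.1 + 1, h⟩ (j + 1)
  support : ∀ i : Fin n, ∀ j : ℕ, i.1 < j → entry i j = 0

/-- The number of Gelfand–Tsetlin patterns with `n` rows and bottom row `u`. -/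
noncomputable def GTPcount (n : ℕ) (u : Fin n → ℕ) : ℕ :=
  Nat.card {T : GTPattern n //
    ∀ j : Fin n, T.entry ⟨n - 1, Nat.sub_lt j.pos Nat.one_pos⟩ j.1 = u j}

/-- `GTP` of a finite set: patterns whose bottom row is the increasing
enumeration of `U`. -/
noncomputable def GTPfinset (U : Finset ℕ) : ℕ :=
  GTPcount U.card (fun j => ((U.orderIsoOfFin rfl j : ℕ)))

/-- `P(A,B) = ∏_{(a,b) ∈ A×B, a<b} (b-a)`. -/
def Pprod (A B : Finset ℕ) : ℕ :=
  ∏ p ∈ (A ×ˢ B).filter (fun p => p.1 < p.2), (p.2 - p.1)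

/-- The superfactorial `sf m = 1!·2!···m!`. -/
def superfactorial : ℕ → ℕ
  | 0 => 1
  | m + 1 => superfactorial m * Nat.factorial (m + 1)

namespace ShufflePf

lemma GTPattern.ext' {n} {T S : GTPattern n} (h : T.entry = S.entry) : T = S := by
  cases T; cases S; simpa using h

lemma entry_congr {n} (T : GTPattern n) {i i' : Fin n} (h : (i : ℕ) = (i' : ℕ)) (j : ℕ) :
    T.entry i j = T.entry i' j := by
  congr 1; exact Fin.ext h

/-- The bottom-row predicate, matching `GTPcount`. -/
def isBottom (n : ℕ) (u : Fin n → ℕ) (T : GTPattern n) : Prop :=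
  ∀ j : Fin n, T.entry ⟨n - 1, Nat.sub_lt j.pos Nat.one_pos⟩ j.1 = u j

lemma GTPcount_eq (n : ℕ) (u : Fin n → ℕ) :
    GTPcount n u = Nat.card {T : GTPattern n // isBottom n u T} := rfl

/-- Every entry is bounded by a suitable entry of the bottom row. -/
lemma entry_le {n : ℕ} (T : GTPattern n) (hn : 0 < n) :
    ∀ d : ℕ, ∀ i : Fin n, (i : ℕ) + d = n - 1 → ∀ j : ℕ,
      T.entry i j ≤ T.entry ⟨n - 1, Nat.sub_lt hn Nat.one_pos⟩ (j + d) := by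
  intro d
  induction d with
  | zero =>
    intro i hi j
    rw [entry_congr T (i' := ⟨n-1, Nat.sub_lt hn Nat.one_pos⟩) (by simpa using hi)]
    simp
  | succ d ih =>
    intro i hi j
    have h1 : i.1 + 1 < n := by omega
    rcases le_or_gt j i.1 with hj | hj
    · have h2 := (T.interlace i h1 j hj).2
      have h3 := ih ⟨i.1 + 1, h1⟩ (by simp; omega) (j + 1)
      calc T.entry i j ≤ T.entry ⟨i.1+1, h1⟩ (j+1) := le_of_lt h2
        _ ≤ T.entry ⟨n - 1, Nat.sub_lt hn Nat.one_pos⟩ (j + 1 + d) := h3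
        _ = _ := by ring_nf
    · rw [T.support i j hj]; exact Nat.zero_le _

lemma finite_isBottom (n : ℕ) (u : Fin n → ℕ) :
    Finite {T : GTPattern n // isBottom n u T} := by
  rcases Nat.eq_zero_or_pos n with rfl | hn
  · have : Unique {T : GTPattern 0 // isBottom 0 u T} := by
      refine ⟨⟨⟨⟨fun i _ => i.elim0, fun i => i.elim0, fun i => i.elim0⟩, fun j => j.elim0⟩⟩, ?_⟩
      rintro ⟨T, hT⟩
      exact Subtype.ext (GTPattern.ext' (funext fun i => i.elim0))
    infer_instance
  · set B := Finset.univ.sup u with hB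
    have hbd : ∀ (T : {T : GTPattern n // isBottom n u T}) (i : Fin n) (j : ℕ),
        T.1.entry i j ≤ B := by
      rintro ⟨T, hT⟩ i j
      have h1 : (i : ℕ) + (n - 1 - i.1) = n - 1 := by omega
      have h2 := entry_le T hn (n - 1 - i.1) i h1 j
      refine h2.trans ?_
      set k := j + (n - 1 - i.1) with hk
      rcases lt_or_ge k n with hkn | hkn
      · have := hT ⟨k, hkn⟩
        simp only at this
        rw [this]
        exact Finset.le_sup (Finset.mem_univ _)
      · rw [T.support _ k (by simp; omega)]
        exact Nat.zero_le _
    have hinj : Function.Injective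
        (fun (T : {T : GTPattern n // isBottom n u T}) (i : Fin n) (j : Fin (n+1)) =>
          (⟨T.1.entry i j, Nat.lt_succ_of_le (hbd T i j)⟩ : Fin (B+1))) := by
      rintro ⟨T, hT⟩ ⟨T', hT'⟩ h
      refine Subtype.ext (GTPattern.ext' (funext fun i => funext fun j => ?_))
      rcases lt_or_ge j n with hj | hj
      · have := congrFun (congrFun h i) ⟨j, by omega⟩
        simpa [Fin.ext_iff] using this
      · rw [T.support i j (by omega), T'.support i j (by omega)]
    exact Finite.of_injective _ hinj

lemma nat_card_sigma {ι : Type*} [Fintype ι] (π : ι → Type*) [∀ i, Finite (π i)] :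
    Nat.card (Σ i, π i) = ∑ i, Nat.card (π i) := by
  letI : ∀ i, Fintype (π i) := fun i => Fintype.ofFinite _
  simp [Nat.card_eq_fintype_card]

/-- index intervals for the second-to-bottom row -/
def Ipi (n : ℕ) (x : Fin (n + 1) → ℕ) : Finset (Fin n → ℕ) :=
  Fintype.piFinset (fun j : Fin n => Finset.Ico (x j.castSucc) (x j.succ))

/-- drop the bottom row -/
def trunc (n : ℕ) (T : GTPattern (n + 1)) : GTPattern n where
  entry := fun i j => T.entry ⟨i.1, by omega⟩ j
  interlace := fun i h j hj =>
    T.interlace ⟨i.1, by omega⟩ (show i.1 + 1 < n + 1 by omega) j hj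
  support := fun i j hj => T.support ⟨i.1, by omega⟩ j hj

/-- entries of the extension of a pattern by a new bottom row `x` -/
def extEntry (n : ℕ) (x : Fin (n + 1) → ℕ) (T' : GTPattern n) : Fin (n + 1) → ℕ → ℕ :=
  fun i j => if h : i.1 < n then T'.entry ⟨i.1, h⟩ j
    else (if hj : j < n + 1 then x ⟨j, hj⟩ else 0)

lemma extEntry_lt {n x T'} {i : Fin (n + 1)} (hi : i.1 < n) (j : ℕ) :
    extEntry n x T' i j = T'.entry ⟨i.1, hi⟩ j := dif_pos hi

lemma extEntry_last {n x T'} {i : Fin (n + 1)} (hi : ¬ i.1 < n) {j : ℕ} (hj : j < n + 1) :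
    extEntry n x T' i j = x ⟨j, hj⟩ := by
  rw [extEntry, dif_neg hi, dif_pos hj]

lemma extEntry_zero {n x T'} {i : Fin (n + 1)} (hi : ¬ i.1 < n) {j : ℕ} (hj : ¬ j < n + 1) :
    extEntry n x T' i j = 0 := by
  rw [extEntry, dif_neg hi, dif_neg hj]

set_option maxHeartbeats 2000000 in
/-- append a bottom row `x` -/
def extend (n : ℕ) (x : Fin (n + 1) → ℕ) (y : Fin n → ℕ) (T' : GTPattern n)
    (hT' : isBottom n y T')
    (hy : ∀ j : Fin n, x j.castSucc ≤ y j ∧ y j < x j.succ) : GTPattern (n + 1) where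
  entry := extEntry n x T'
  interlace := by
    intro i h j hj
    by_cases hi : i.1 + 1 < n
    · have hi0 : i.1 < n := by omega
      have key := T'.interlace ⟨i.1, hi0⟩ (show i.1 + 1 < n by omega) j hj
      rw [extEntry_lt (i := ⟨i.1 + 1, h⟩) (show ((⟨i.1 + 1, h⟩ : Fin (n+1))).1 < n from hi) j,
        extEntry_lt (i := i) hi0 j,
        extEntry_lt (i := ⟨i.1 + 1, h⟩) (show ((⟨i.1 + 1, h⟩ : Fin (n+1))).1 < n from hi) (j + 1)]
      exact key
    · have hi1 : i.1 + 1 = n := by omega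
      have hi0 : i.1 < n := by omega
      have hn : 0 < n := by omega
      have hjn : j < n := by omega
      have hb1 : T'.entry ⟨i.1, hi0⟩ j = y ⟨j, hjn⟩ := by
        rw [entry_congr T' (i' := ⟨n - 1, Nat.sub_lt hn Nat.one_pos⟩) (by simp; omega)]
        exact hT' ⟨j, hjn⟩
      have h0 := hy ⟨j, hjn⟩
      have hyj1 : x ⟨j, by omega⟩ ≤ y ⟨j, hjn⟩ := by
        refine le_trans (le_of_eq (congrArg x (Fin.ext ?_))) h0.1
        simp
      have hyj2 : y ⟨j, hjn⟩ < x ⟨j + 1, by omega⟩ := by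
        refine lt_of_lt_of_le h0.2 (le_of_eq (congrArg x (Fin.ext ?_)))
        simp
      constructor
      · calc extEntry n x T' ⟨i.1 + 1, h⟩ j
            = x ⟨j, by omega⟩ := extEntry_last hi (by omega)
          _ ≤ y ⟨j, hjn⟩ := hyj1
          _ = T'.entry ⟨i.1, hi0⟩ j := hb1.symm
          _ = extEntry n x T' i j := (extEntry_lt hi0 j).symm
      · calc extEntry n x T' i j
            = T'.entry ⟨i.1, hi0⟩ j := extEntry_lt hi0 j
          _ = y ⟨j, hjn⟩ := hb1
          _ < x ⟨j + 1, by omega⟩ := hyj2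
          _ = extEntry n x T' ⟨i.1 + 1, h⟩ (j + 1) := (extEntry_last hi (by omega)).symm
  support := by
    intro i j hj
    by_cases hi : i.1 < n
    · rw [extEntry_lt hi]
      exact T'.support ⟨i.1, hi⟩ j hj
    · exact extEntry_zero hi (by omega)

set_option maxHeartbeats 1000000 in
lemma GTPcount_succ (n : ℕ) (x : Fin (n + 1) → ℕ) :
    GTPcount (n + 1) x = ∑ y ∈ Ipi n x, GTPcount n y := by
  classical
  haveI : Finite {T : GTPattern (n+1) // isBottom (n+1) x T} := finite_isBottom _ _
  have hmem : ∀ T : {T : GTPattern (n+1) // isBottom (n+1) x T},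
      (fun j : Fin n => T.1.entry ⟨n - 1, by omega⟩ j.1) ∈ Ipi n x := by
    rintro ⟨T, hT⟩
    rw [Ipi, Fintype.mem_piFinset]
    intro j
    have hn : 0 < n := j.pos
    have hint := T.interlace ⟨n - 1, by omega⟩ (show n - 1 + 1 < n + 1 by omega) j.1
      (show j.1 ≤ n - 1 by omega)
    have he1 : ∀ (k : ℕ) (hk : k < n + 1), T.entry ⟨n - 1 + 1, by omega⟩ k = x ⟨k, hk⟩ := by
      intro k hk
      rw [entry_congr T (i' := ⟨n + 1 - 1, by omega⟩) (by simp; omega)]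
      exact hT ⟨k, hk⟩
    rw [Finset.mem_Ico]
    constructor
    · have h1 := hint.1
      rw [he1 j.1 (by omega)] at h1
      refine le_trans (le_of_eq (congrArg x (Fin.ext ?_))) h1
      simp
    · have h2 := hint.2
      rw [he1 (j.1 + 1) (by omega)] at h2
      refine lt_of_lt_of_le h2 (le_of_eq (congrArg x (Fin.ext ?_)))
      simp
  set Φ : {T : GTPattern (n+1) // isBottom (n+1) x T} → ↥(Ipi n x) :=
    fun T => ⟨fun j : Fin n => T.1.entry ⟨n - 1, by omega⟩ j.1, hmem T⟩ with hΦdef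
  rw [GTPcount_eq, Nat.card_congr (Equiv.sigmaFiberEquiv Φ).symm, nat_card_sigma]
  rw [← Finset.sum_coe_sort (Ipi n x) (fun y => GTPcount n y)]
  refine Finset.sum_congr rfl fun y _ => ?_
  have hy' : ∀ j : Fin n, x j.castSucc ≤ (y : Fin n → ℕ) j ∧ (y : Fin n → ℕ) j < x j.succ := by
    intro j
    exact Finset.mem_Ico.mp ((Fintype.mem_piFinset.mp y.2) j)
  have e : {T // Φ T = y} ≃ {T' : GTPattern n // isBottom n (y : Fin n → ℕ) T'} := by
    refine ⟨fun p => ⟨trunc n p.1.1, ?_⟩,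
      fun q => ⟨⟨extend n x y q.1 q.2 hy', ?_⟩, ?_⟩, ?_, ?_⟩
    · intro j
      have hval := congrFun (congrArg Subtype.val p.2) j
      simp only [hΦdef] at hval
      calc (trunc n p.1.1).entry ⟨n - 1, Nat.sub_lt j.pos Nat.one_pos⟩ j.1
          = p.1.1.entry ⟨n - 1, by omega⟩ j.1 := rfl
        _ = (y : Fin n → ℕ) j := hval
    · intro j
      show extEntry n x q.1 ⟨n + 1 - 1, _⟩ j.1 = x j
      rw [extEntry_last (show ¬ (⟨n + 1 - 1, Nat.sub_lt j.pos Nat.one_pos⟩ : Fin (n+1)).1 < n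
        by simp) j.isLt]
    · refine Subtype.ext (funext fun j => ?_)
      have hn : 0 < n := j.pos
      show extEntry n x q.1 ⟨n - 1, _⟩ j.1 = (y : Fin n → ℕ) j
      rw [extEntry_lt (show (⟨n - 1, by omega⟩ : Fin (n + 1)).1 < n by simp; omega)]
      calc q.1.entry ⟨n - 1, _⟩ j.1
          = q.1.entry ⟨n - 1, Nat.sub_lt j.pos Nat.one_pos⟩ j.1 := entry_congr _ (by simp) j.1
        _ = (y : Fin n → ℕ) j := q.2 j
    · rintro ⟨⟨T, hT⟩, hfib⟩
      refine Subtype.ext (Subtype.ext (GTPattern.ext' (funext fun i => funext fun j => ?_)))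
      show extEntry n x (trunc n T) i j = T.entry i j
      by_cases hi : i.1 < n
      · rw [extEntry_lt hi]
        rfl
      · by_cases hj : j < n + 1
        · rw [extEntry_last hi hj]
          rw [entry_congr T (i := i) (i' := ⟨n + 1 - 1, by omega⟩) (by simp; omega)]
          exact (hT ⟨j, hj⟩).symm
        · rw [extEntry_zero hi hj, T.support i j (by omega)]
    · rintro ⟨T', hT'⟩
      refine Subtype.ext (GTPattern.ext' (funext fun i => funext fun j => ?_))
      show extEntry n x T' ⟨i.1, _⟩ j = T'.entry i j
      rw [extEntry_lt (show ((⟨i.1, by omega⟩ : Fin (n + 1))).1 < n from i.isLt)]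
  rw [Nat.card_congr e, GTPcount_eq]

lemma GTPcount_zero (u : Fin 0 → ℕ) : GTPcount 0 u = 1 := by
  rw [GTPcount_eq]
  have : Unique {T : GTPattern 0 // isBottom 0 u T} := by
    refine ⟨⟨⟨⟨fun i _ => i.elim0, fun i => i.elim0, fun i => i.elim0⟩, fun j => j.elim0⟩⟩, ?_⟩
    rintro ⟨T, hT⟩
    exact Subtype.ext (GTPattern.ext' (funext fun i => i.elim0))
  exact Nat.card_unique

/-- sum of binomials over an interval -/
lemma sum_Ico_choose (a b j : ℕ) (h : a ≤ b) :
    (∑ t ∈ Finset.Ico a b, ((t.choose j : ℤ))) = (b.choose (j + 1) : ℤ) - (a.choose (j + 1) : ℤ) := by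
  induction b, h using Nat.le_induction with
  | base => simp
  | succ b hb ih =>
    rw [Finset.sum_Ico_succ_top hb, ih, Nat.choose_succ_succ (n := b) (k := j)]
    push_cast
    ring

lemma det_succ_diff (n : ℕ) (M : Matrix (Fin (n+1)) (Fin (n+1)) ℤ) (h0 : ∀ i, M i 0 = 1) :
    M.det = (Matrix.of fun i j : Fin n => M i.succ j.succ - M i.castSucc j.succ).det := by
  classical
  set L : Matrix (Fin (n+1)) (Fin (n+1)) ℤ :=
    Matrix.of fun i k => (if (k:ℕ) = (i:ℕ) then (1:ℤ) else 0) - (if (k:ℕ) + 1 = (i:ℕ) then 1 else 0) with hL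
  have hLdet : L.det = 1 := by
    have htri : L.BlockTriangular OrderDual.toDual := by
      intro i k hik
      have h1 : (i : ℕ) < (k : ℕ) := hik
      simp only [hL, Matrix.of_apply]
      split_ifs <;> omega
    rw [Matrix.det_of_lowerTriangular L htri]
    have hd : ∀ i : Fin (n+1), L i i = 1 := by
      intro i
      simp only [hL, Matrix.of_apply]
      split_ifs <;> omega
    simp [hd]
  have hLM : ∀ (i : Fin n) (j : Fin (n+1)), (L * M) i.succ j = M i.succ j - M i.castSucc j := by
    intro i j
    rw [Matrix.mul_apply]
    have hk : ∀ k : Fin (n+1), L i.succ k * M k j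
        = (if k = i.succ then M k j else 0) - (if k = i.castSucc then M k j else 0) := by
      intro k
      simp only [hL, Matrix.of_apply]
      have e1 : ((k:ℕ) = (i.succ : ℕ)) ↔ k = i.succ := by rw [Fin.ext_iff]
      have e2 : ((k:ℕ) + 1 = (i.succ : ℕ)) ↔ k = i.castSucc := by
        rw [Fin.ext_iff, Fin.val_succ, Fin.coe_castSucc]; omega
      have hcontr : ¬(k = i.succ ∧ k = i.castSucc) := by
        rintro ⟨rfl, h2⟩
        have := congrArg Fin.val h2
        simp only [Fin.val_succ, Fin.coe_castSucc] at this
        omega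
      have hne : (i.succ : Fin (n+1)) ≠ i.castSucc := by
        intro h
        have := congrArg Fin.val h
        simp only [Fin.val_succ, Fin.coe_castSucc] at this
        omega
      rw [if_congr e1 rfl rfl, if_congr e2 rfl rfl]
      by_cases h1 : k = i.succ <;> by_cases h2 : k = i.castSucc
      · exact absurd ⟨h1, h2⟩ hcontr
      · subst h1; rw [if_neg hne, if_neg hne]; simp
      · subst h2; rw [if_neg (Ne.symm hne), if_neg (Ne.symm hne)]; simp
      · rw [if_neg h1, if_neg h2, if_neg h1, if_neg h2]; ring
    rw [Finset.sum_congr rfl (fun k _ => hk k), Finset.sum_sub_distrib]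
    simp [Finset.sum_ite_eq']
  have hLM0 : ∀ j, (L * M) 0 j = M 0 j := by
    intro j
    rw [Matrix.mul_apply]
    have hk : ∀ k : Fin (n+1), L 0 k * M k j = if k = 0 then M k j else 0 := by
      intro k
      simp only [hL, Matrix.of_apply]
      have e1 : ((k:ℕ) = ((0 : Fin (n+1)):ℕ)) ↔ k = 0 := by rw [Fin.ext_iff]
      rw [if_congr e1 rfl rfl]
      by_cases h1 : k = 0
      · subst h1; simp
      · have h2 : ¬((k:ℕ) + 1 = ((0 : Fin (n+1)):ℕ)) := by simp
        rw [if_neg h1, if_neg h2, if_neg h1]; ring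
    rw [Finset.sum_congr rfl (fun k _ => hk k)]
    simp [Finset.sum_ite_eq']
  have hdet : M.det = (L * M).det := by rw [Matrix.det_mul, hLdet, one_mul]
  rw [hdet, Matrix.det_succ_column_zero]
  rw [Finset.sum_eq_single 0]
  · rw [Fin.succAbove_zero]
    have h00 : (L * M) 0 0 = 1 := by rw [hLM0]; exact h0 0
    rw [h00]
    simp only [Fin.val_zero, pow_zero, one_mul, mul_one]
    congr 1
    ext i j
    simp only [Matrix.submatrix_apply, Matrix.of_apply]
    rw [hLM i j.succ]
  · intro i _ hi
    rcases Fin.eq_zero_or_eq_succ i with rfl | ⟨i', rfl⟩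
    · exact absurd rfl hi
    · have hz : (L * M) i'.succ 0 = 0 := by
        rw [hLM i' 0, h0, h0, sub_self]
      rw [hz]; ring
  · intro h; exact absurd (Finset.mem_univ 0) h

/-- determinant recursion for the binomial matrix -/
lemma det_choose_succ (n : ℕ) (x : Fin (n + 1) → ℕ) (hx : Monotone x) :
    (Matrix.of fun i j : Fin (n + 1) => ((x i).choose (j : ℕ) : ℤ)).det
      = ∑ y ∈ Ipi n x, (Matrix.of fun i j : Fin n => ((y i).choose (j : ℕ) : ℤ)).det := by
  classical
  have hsum := MultilinearMap.map_sum_finset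
      (f := (Matrix.detRowAlternating (R := ℤ) (n := Fin n)).toMultilinearMap)
      (g := fun (i : Fin n) (t : ℕ) => (fun j : Fin n => ((t.choose (j : ℕ)) : ℤ)))
      (A := fun j : Fin n => Finset.Ico (x j.castSucc) (x j.succ))
  rw [Ipi]
  calc (Matrix.of fun i j : Fin (n + 1) => ((x i).choose (j : ℕ) : ℤ)).det
      = (Matrix.of fun i j : Fin n =>
          (Matrix.of fun i j : Fin (n+1) => ((x i).choose (j : ℕ) : ℤ)) i.succ j.succ
          - (Matrix.of fun i j : Fin (n+1) => ((x i).choose (j : ℕ) : ℤ)) i.castSucc j.succ).det :=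
        det_succ_diff n _ (fun i => by simp)
    _ = (Matrix.of fun (i j : Fin n) =>
          ∑ t ∈ Finset.Ico (x i.castSucc) (x i.succ), ((t.choose (j : ℕ)) : ℤ)).det := by
        congr 1
        ext i j
        simp only [Matrix.of_apply, Fin.val_succ]
        exact (sum_Ico_choose _ _ _ (hx (by rw [Fin.le_def]; simp))).symm
    _ = ∑ y ∈ Fintype.piFinset (fun j : Fin n => Finset.Ico (x j.castSucc) (x j.succ)),
          (Matrix.of fun i j : Fin n => ((y i).choose (j : ℕ) : ℤ)).det := by
        have e1 : (fun (i : Fin n) (j : Fin n) =>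
              ∑ t ∈ Finset.Ico (x i.castSucc) (x i.succ), ((t.choose (j : ℕ)) : ℤ))
            = (fun i : Fin n => ∑ t ∈ Finset.Ico (x i.castSucc) (x i.succ),
                (fun j : Fin n => ((t.choose (j : ℕ)) : ℤ))) := by
          funext i
          rw [Finset.sum_fn]
        show (Matrix.detRowAlternating (R := ℤ) (n := Fin n)).toMultilinearMap
            (fun (i : Fin n) (j : Fin n) =>
              ∑ t ∈ Finset.Ico (x i.castSucc) (x i.succ), ((t.choose (j : ℕ)) : ℤ)) = _
        rw [e1, hsum]
        rfl

lemma strictMono_of_mem_Ipi {n : ℕ} {x : Fin (n + 1) → ℕ} (hx : StrictMono x)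
    {y : Fin n → ℕ} (hy : y ∈ Ipi n x) : StrictMono y := by
  rw [Ipi, Fintype.mem_piFinset] at hy
  have key : ∀ i j : Fin n, (i : ℕ) < (j : ℕ) → y i < y j := by
    intro i j hij
    have h1 := (Finset.mem_Ico.mp (hy i)).2
    have h2 := (Finset.mem_Ico.mp (hy j)).1
    calc y i < x i.succ := h1
      _ ≤ x j.castSucc := by
          rcases eq_or_lt_of_le (Nat.succ_le_of_lt hij) with he | hl
          · exact le_of_eq (congrArg x (Fin.ext (by simp; omega)))
          · refine le_of_lt (hx ?_)
            rw [Fin.lt_def]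
            simpa using hl
      _ ≤ y j := h2
  exact fun i j hij => key i j hij

/-- The key identity: GTP count equals the binomial determinant. -/
lemma GTPcount_eq_det : ∀ (n : ℕ) (x : Fin n → ℕ), StrictMono x →
    (GTPcount n x : ℤ) = (Matrix.of fun i j : Fin n => ((x i).choose (j : ℕ) : ℤ)).det := by
  intro n
  induction n with
  | zero => intro x _; rw [GTPcount_zero]; simp [Matrix.det_fin_zero]
  | succ n ih =>
    intro x hx
    rw [GTPcount_succ, det_choose_succ n x hx.monotone, Nat.cast_sum]
    exact Finset.sum_congr rfl fun y hy => ih y (strictMono_of_mem_Ipi hx hy)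

lemma prod_factorial_eq_superfactorial (n : ℕ) :
    (∏ j : Fin n, (Nat.factorial (j : ℕ))) = superfactorial (n - 1) := by
  induction n with
  | zero => simp [superfactorial]
  | succ n ih =>
    rw [Fin.prod_univ_castSucc]
    simp only [Fin.coe_castSucc, Fin.val_last, ih]
    cases n with
    | zero => simp [superfactorial]
    | succ m => show _ = superfactorial (m+1); rw [superfactorial]; rfl

/-- binomial det times superfactorial is the Vandermonde product -/
lemma det_choose_mul (n : ℕ) (x : Fin n → ℕ) :
    (Matrix.of fun i j : Fin n => ((x i).choose (j : ℕ) : ℤ)).det * (superfactorial (n - 1) : ℤ)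
      = ∏ i : Fin n, ∏ j ∈ Finset.Ioi i, ((x j : ℤ) - (x i : ℤ)) := by
  have key : (Matrix.of fun i j : Fin n =>
        ((Nat.factorial (j : ℕ) : ℤ)) * ((x i).choose (j : ℕ) : ℤ)).det
      = (Matrix.vandermonde (fun i : Fin n => (x i : ℤ))).det := by
    have e1 : (Matrix.of fun i j : Fin n =>
        ((Nat.factorial (j : ℕ) : ℤ)) * ((x i).choose (j : ℕ) : ℤ))
        = (Matrix.of fun i j : Fin n => (descPochhammer ℤ (j : ℕ)).eval ((x i : ℤ))) := by
      ext i j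
      simp only [Matrix.of_apply]
      rw [descPochhammer_eval_eq_descFactorial ℤ (x i) (j : ℕ),
        ← Nat.cast_mul, Nat.descFactorial_eq_factorial_mul_choose]
    rw [e1]
    exact (Matrix.det_eval_matrixOfPolynomials_eq_det_vandermonde (fun i => (x i : ℤ))
      (fun j => descPochhammer ℤ (j : ℕ))
      (fun i => descPochhammer_natDegree (R := ℤ) (i : ℕ))
      (fun i => monic_descPochhammer ℤ (i : ℕ))).symm
  have hmr := Matrix.det_mul_row (fun j : Fin n => (Nat.factorial (j : ℕ) : ℤ))
    (Matrix.of fun i j : Fin n => ((x i).choose (j : ℕ) : ℤ))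
  simp only [Matrix.of_apply] at hmr
  rw [hmr] at key
  have hp : (∏ j : Fin n, (Nat.factorial (j : ℕ) : ℤ)) = (superfactorial (n - 1) : ℤ) := by
    rw [← Nat.cast_prod, prod_factorial_eq_superfactorial]
  rw [hp] at key
  rw [mul_comm, ← Matrix.det_vandermonde (fun i : Fin n => (x i : ℤ))]
  exact key

lemma GTPcount_mul_superfactorial (n : ℕ) (x : Fin n → ℕ) (hx : StrictMono x) :
    (GTPcount n x) * superfactorial (n - 1) = ∏ i : Fin n, ∏ j ∈ Finset.Ioi i, (x j - x i) := by
  have h := GTPcount_eq_det n x hx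
  have h2 := det_choose_mul n x
  have : ((GTPcount n x) * superfactorial (n - 1) : ℤ)
      = ∏ i : Fin n, ∏ j ∈ Finset.Ioi i, ((x j : ℤ) - (x i : ℤ)) := by
    rw [h, h2]
  have h3 : (∏ i : Fin n, ∏ j ∈ Finset.Ioi i, ((x j : ℤ) - (x i : ℤ)))
      = ((∏ i : Fin n, ∏ j ∈ Finset.Ioi i, (x j - x i) : ℕ) : ℤ) := by
    rw [Nat.cast_prod]
    refine Finset.prod_congr rfl fun i _ => ?_
    rw [Nat.cast_prod]
    refine Finset.prod_congr rfl fun j hj => ?_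
    rw [Nat.cast_sub (le_of_lt (hx (Finset.mem_Ioi.mp hj)))]
  exact_mod_cast this.trans h3

/-- `Pprod U U` as a product over pairs of indices. -/
lemma Pprod_self_eq (U : Finset ℕ) :
    Pprod U U = ∏ i : Fin U.card, ∏ j ∈ Finset.Ioi i,
      ((U.orderIsoOfFin rfl j : ℕ) - (U.orderIsoOfFin rfl i : ℕ)) := by
  classical
  set e := U.orderIsoOfFin rfl with he
  rw [← Finset.prod_sigma (Finset.univ : Finset (Fin U.card)) (fun i => Finset.Ioi i)
    (fun p => ((e p.2 : ℕ) - (e p.1 : ℕ)))]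
  unfold Pprod
  refine (Finset.prod_bij (fun (p : Σ _ : Fin U.card, Fin U.card) _ => ((e p.1 : ℕ), (e p.2 : ℕ)))
    ?_ ?_ ?_ ?_).symm
  · rintro ⟨i, j⟩ hij
    simp only [Finset.mem_sigma, Finset.mem_Ioi] at hij
    refine Finset.mem_filter.mpr ⟨Finset.mem_product.mpr ⟨(e i).2, (e j).2⟩, ?_⟩
    exact_mod_cast e.strictMono hij.2
  · rintro ⟨i, j⟩ hij ⟨i', j'⟩ hij' hval
    simp only [Prod.mk.injEq] at hval
    have h1 : e i = e i' := Subtype.ext hval.1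
    have h2 : e j = e j' := Subtype.ext hval.2
    exact Sigma.ext (e.injective h1) (heq_of_eq (e.injective h2))
  · rintro ⟨a, b⟩ hab
    rw [Finset.mem_filter, Finset.mem_product] at hab
    refine ⟨⟨e.symm ⟨a, hab.1.1⟩, e.symm ⟨b, hab.1.2⟩⟩, ?_, ?_⟩
    · simp only [Finset.mem_sigma, Finset.mem_univ, Finset.mem_Ioi, true_and]
      exact e.symm.strictMono (show (⟨a, hab.1.1⟩ : ↥U) < ⟨b, hab.1.2⟩ from hab.2)
    · simp
  · rintro ⟨i, j⟩ hij
    rfl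

lemma GTPfinset_mul (U : Finset ℕ) :
    GTPfinset U * superfactorial (U.card - 1) = Pprod U U := by
  rw [GTPfinset, Pprod_self_eq]
  exact GTPcount_mul_superfactorial _ _ (fun i j hij => by
    exact_mod_cast (U.orderIsoOfFin rfl).strictMono hij)

/-! ### Pprod algebra -/

lemma Pprod_union_left (A B C : Finset ℕ) (h : Disjoint A B) :
    Pprod (A ∪ B) C = Pprod A C * Pprod B C := by
  unfold Pprod
  rw [Finset.union_product, Finset.filter_union, Finset.prod_union]
  exact Finset.disjoint_filter_filter (Finset.disjoint_product.mpr (Or.inl h))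

lemma Pprod_union_right (A B C : Finset ℕ) (h : Disjoint B C) :
    Pprod A (B ∪ C) = Pprod A B * Pprod A C := by
  unfold Pprod
  rw [Finset.product_union, Finset.filter_union, Finset.prod_union]
  exact Finset.disjoint_filter_filter (Finset.disjoint_product.mpr (Or.inr h))

lemma Pprod_split (C D : Finset ℕ) (h : Disjoint C D) :
    Pprod (C ∪ D) (C ∪ D) = Pprod C C * Pprod D D * (Pprod C D * Pprod D C) := by
  rw [Pprod_union_left _ _ _ h, Pprod_union_right _ _ _ h, Pprod_union_right _ _ _ h]
  ring

end ShufflePf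

open ShufflePf in
/-- The shuffling theorem for GTP counts, in equational (division-free) form. -/
theorem stmt_9 (U L S : Finset ℕ)
    (hS : S ⊆ (U \ (U ∩ L)) ∪ (L \ (U ∩ L))) :
    GTPfinset U * GTPfinset L *
        Pprod (((U \ S) ∪ (L ∩ S)) \ (U ∩ L)) (((U \ S) ∪ (L ∩ S)) \ (U ∩ L)) *
        Pprod (((L \ S) ∪ (U ∩ S)) \ (U ∩ L)) (((L \ S) ∪ (U ∩ S)) \ (U ∩ L)) *
        superfactorial (U.card - 1) * superfactorial (L.card - 1) =
      GTPfinset ((U \ S) ∪ (L ∩ S)) * GTPfinset ((L \ S) ∪ (U ∩ S)) *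
        Pprod (U \ (U ∩ L)) (U \ (U ∩ L)) * Pprod (L \ (U ∩ L)) (L \ (U ∩ L)) *
        superfactorial (((U \ S) ∪ (L ∩ S)).card - 1) *
        superfactorial (((L \ S) ∪ (U ∩ S)).card - 1) := by
  classical
  set C := U ∩ L with hC
  set U' := (U \ S) ∪ (L ∩ S) with hU'
  set L' := (L \ S) ∪ (U ∩ S) with hL'
  -- set facts
  have f4U : C ∪ (U \ C) = U := Finset.union_sdiff_of_subset Finset.inter_subset_left
  have f4L : C ∪ (L \ C) = L := Finset.union_sdiff_of_subset Finset.inter_subset_right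
  have hCU' : C ⊆ U' := by
    intro a ha
    simp only [hC, Finset.mem_inter] at ha
    simp only [hU', Finset.mem_union, Finset.mem_sdiff, Finset.mem_inter]
    by_cases hs : a ∈ S
    · exact Or.inr ⟨ha.2, hs⟩
    · exact Or.inl ⟨ha.1, hs⟩
  have hCL' : C ⊆ L' := by
    intro a ha
    simp only [hC, Finset.mem_inter] at ha
    simp only [hL', Finset.mem_union, Finset.mem_sdiff, Finset.mem_inter]
    by_cases hs : a ∈ S
    · exact Or.inr ⟨ha.1, hs⟩
    · exact Or.inl ⟨ha.2, hs⟩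
  have f4U' : C ∪ (U' \ C) = U' := Finset.union_sdiff_of_subset hCU'
  have f4L' : C ∪ (L' \ C) = L' := Finset.union_sdiff_of_subset hCL'
  have f1 : Disjoint (U \ C) (L \ C) := by
    rw [Finset.disjoint_left]
    intro a ha hb
    simp only [hC, Finset.mem_sdiff, Finset.mem_inter] at ha hb
    exact ha.2 ⟨ha.1, hb.1⟩
  have f6 : Disjoint (U' \ C) (L' \ C) := by
    rw [Finset.disjoint_left]
    intro a ha hb
    simp only [hU', hL', hC, Finset.mem_sdiff, Finset.mem_union, Finset.mem_inter] at ha hb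
    rcases ha.1 with h | h <;> rcases hb.1 with h' | h'
    · exact ha.2 ⟨h.1, h'.1⟩
    · exact h.2 h'.2
    · exact h'.2 h.2
    · exact ha.2 ⟨h'.1, h.1⟩
  have f7 : (U \ C) ∪ (L \ C) = (U' \ C) ∪ (L' \ C) := by
    ext a
    simp only [hU', hL', hC, Finset.mem_union, Finset.mem_sdiff, Finset.mem_inter]
    by_cases hs : a ∈ S <;> by_cases hu : a ∈ U <;> by_cases hl : a ∈ L <;> simp [hs, hu, hl]
  -- cross-term identities
  have hcross1 : Pprod C (U \ C) * Pprod C (L \ C) = Pprod C (U' \ C) * Pprod C (L' \ C) := by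
    rw [← Pprod_union_right _ _ _ f1, ← Pprod_union_right _ _ _ f6, f7]
  have hcross2 : Pprod (U \ C) C * Pprod (L \ C) C = Pprod (U' \ C) C * Pprod (L' \ C) C := by
    rw [← Pprod_union_left _ _ _ f1, ← Pprod_union_left _ _ _ f6, f7]
  -- expansions
  have eU : Pprod U U = Pprod C C * Pprod (U \ C) (U \ C)
      * (Pprod C (U \ C) * Pprod (U \ C) C) := by
    conv_lhs => rw [← f4U]
    exact Pprod_split C (U \ C) Finset.disjoint_sdiff
  have eL : Pprod L L = Pprod C C * Pprod (L \ C) (L \ C)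
      * (Pprod C (L \ C) * Pprod (L \ C) C) := by
    conv_lhs => rw [← f4L]
    exact Pprod_split C (L \ C) Finset.disjoint_sdiff
  have eU' : Pprod U' U' = Pprod C C * Pprod (U' \ C) (U' \ C)
      * (Pprod C (U' \ C) * Pprod (U' \ C) C) := by
    conv_lhs => rw [← f4U']
    exact Pprod_split C (U' \ C) Finset.disjoint_sdiff
  have eL' : Pprod L' L' = Pprod C C * Pprod (L' \ C) (L' \ C)
      * (Pprod C (L' \ C) * Pprod (L' \ C) C) := by
    conv_lhs => rw [← f4L']
    exact Pprod_split C (L' \ C) Finset.disjoint_sdiff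
  -- the key product identity
  have key : Pprod U U * Pprod L L * Pprod (U' \ C) (U' \ C) * Pprod (L' \ C) (L' \ C)
      = Pprod U' U' * Pprod L' L' * Pprod (U \ C) (U \ C) * Pprod (L \ C) (L \ C) := by
    rw [eU, eL, eU', eL']
    calc (Pprod C C * Pprod (U \ C) (U \ C) * (Pprod C (U \ C) * Pprod (U \ C) C))
          * (Pprod C C * Pprod (L \ C) (L \ C) * (Pprod C (L \ C) * Pprod (L \ C) C))
          * Pprod (U' \ C) (U' \ C) * Pprod (L' \ C) (L' \ C)
        = (Pprod C C * Pprod C C * Pprod (U \ C) (U \ C) * Pprod (L \ C) (L \ C)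
            * Pprod (U' \ C) (U' \ C) * Pprod (L' \ C) (L' \ C))
          * ((Pprod C (U \ C) * Pprod C (L \ C)) * (Pprod (U \ C) C * Pprod (L \ C) C)) := by
          ring
      _ = (Pprod C C * Pprod C C * Pprod (U \ C) (U \ C) * Pprod (L \ C) (L \ C)
            * Pprod (U' \ C) (U' \ C) * Pprod (L' \ C) (L' \ C))
          * ((Pprod C (U' \ C) * Pprod C (L' \ C)) * (Pprod (U' \ C) C * Pprod (L' \ C) C)) := by
          rw [hcross1, hcross2]
      _ = _ := by ring
  -- finish
  have hU := GTPfinset_mul U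
  have hL := GTPfinset_mul L
  have hU'm := GTPfinset_mul U'
  have hL'm := GTPfinset_mul L'
  calc GTPfinset U * GTPfinset L * Pprod (U' \ C) (U' \ C) * Pprod (L' \ C) (L' \ C)
        * superfactorial (U.card - 1) * superfactorial (L.card - 1)
      = (GTPfinset U * superfactorial (U.card - 1)) * (GTPfinset L * superfactorial (L.card - 1))
        * Pprod (U' \ C) (U' \ C) * Pprod (L' \ C) (L' \ C) := by ring
    _ = Pprod U U * Pprod L L * Pprod (U' \ C) (U' \ C) * Pprod (L' \ C) (L' \ C) := by
        rw [hU, hL]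
    _ = Pprod U' U' * Pprod L' L' * Pprod (U \ C) (U \ C) * Pprod (L \ C) (L \ C) := key
    _ = (GTPfinset U' * superfactorial (U'.card - 1)) * (GTPfinset L' * superfactorial (L'.card - 1))
        * Pprod (U \ C) (U \ C) * Pprod (L \ C) (L \ C) := by
        rw [hU'm, hL'm]
    _ = GTPfinset U' * GTPfinset L' * Pprod (U \ C) (U \ C) * Pprod (L \ C) (L \ C)
        * superfactorial (U'.card - 1) * superfactorial (L'.card - 1) := by ring
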